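/- arXiv:1201.5968 — 2 statements merged into one kernel-verified Lean document; each statement's English description precedes it below -/
import Mathlib

section
/- Let U be a finite nonempty set, f : U → ℝ with f(x) > 0, ρ : U → ℝ nonnegative and not identically zero. Let a > 0 be the unique solution of Σ_{x∈U} (1/f(x)) ρ(x)(a − ρ(x))⁺ = 1, and set w_ρ(x) = ((a − ρ(x))⁺/f(x)) / Σ_{y∈U} ((a − ρ(y))⁺/f(y)). Then w_ρ minimizes g_ρ(w) = (Σ_x w(x)ρ(x))² + Σ_x w(x)² f(x) over all w with w(x) ≥ 0 and Σ_x w(x) = 1, and it is the unique minimizer. -/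
open Finset

theorem stmt_3 {U : Type*} [Fintype U] [Nonempty U]
    (f ρ : U → ℝ) (hf : ∀ x, 0 < f x) (hρ : ∀ x, 0 ≤ ρ x)
    (hρne : ∃ x, ρ x ≠ 0)
    (a : ℝ) (ha : 0 < a)
    (haeq : ∑ x : U, (1 / f x) * ρ x * max (a - ρ x) 0 = 1)
    (w : U → ℝ)
    (hw : w = fun x =>
      (max (a - ρ x) 0 / f x) / ∑ y : U, max (a - ρ y) 0 / f y)
    (g : (U → ℝ) → ℝ)
    (hg : g = fun v => (∑ x : U, v x * ρ x) ^ 2 + ∑ x : U, (v x) ^ 2 * f x) :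
    (∀ v : U → ℝ, (∀ x, 0 ≤ v x) → ∑ x : U, v x = 1 → g w ≤ g v) ∧
      (∀ v : U → ℝ, (∀ x, 0 ≤ v x) → ∑ x : U, v x = 1 →
        (∀ u : U → ℝ, (∀ x, 0 ≤ u x) → ∑ x : U, u x = 1 → g v ≤ g u) → v = w) := by
  set T : ℝ := ∑ y : U, max (a - ρ y) 0 / f y with hTdef
  have hfne : ∀ x, f x ≠ 0 := fun x => (hf x).ne'
  have hterm_le : ∀ x : U, (1 / f x) * ρ x * max (a - ρ x) 0 ≤ a * (max (a - ρ x) 0 / f x) := by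
    intro x
    rcases le_or_gt (a - ρ x) 0 with h | h
    · simp [max_eq_right h]
    · have hmax : max (a - ρ x) 0 = a - ρ x := max_eq_left h.le
      have hfx := hf x
      have h1 : ρ x * (a - ρ x) ≤ a * (a - ρ x) := by nlinarith [hρ x]
      rw [hmax]
      calc 1 / f x * ρ x * (a - ρ x) = ρ x * (a - ρ x) / f x := by ring
        _ ≤ a * (a - ρ x) / f x := (div_le_div_iff_of_pos_right hfx).mpr h1
        _ = a * ((a - ρ x) / f x) := by ring
  have hT1 : 1 ≤ a * T := by
    rw [← haeq, hTdef, mul_sum]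
    exact sum_le_sum fun x _ => hterm_le x
  have hT : 0 < T := by nlinarith
  have hwx : ∀ x, w x = max (a - ρ x) 0 / f x / T := by
    intro x; rw [hw]
  have hw0 : ∀ x, 0 ≤ w x := by
    intro x; rw [hwx]
    exact div_nonneg (div_nonneg (le_max_right _ _) (hf x).le) hT.le
  have hwsum : ∑ x : U, w x = 1 := by
    simp only [hwx]
    rw [← sum_div, ← hTdef, div_self hT.ne']
  have hS : ∑ x : U, w x * ρ x = 1 / T := by
    simp only [hwx]
    rw [← haeq, sum_div]
    exact sum_congr rfl fun x _ => by ring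
  have hwf : ∀ x, w x * f x = max (a - ρ x) 0 / T := by
    intro x; rw [hwx]; field_simp
    rw [mul_div_assoc, div_self (hfne x), mul_one]
  -- the key expansion
  have key : ∀ v : U → ℝ, (∀ x, 0 ≤ v x) → ∑ x : U, v x = 1 →
      g w + ∑ x : U, (v x - w x) ^ 2 * f x ≤ g v := by
    intro v hv0 hv1
    have hd0 : ∑ x : U, (v x - w x) = 0 := by
      rw [sum_sub_distrib, hv1, hwsum, sub_self]
    have e1 : ∑ x : U, v x * ρ x = ∑ x : U, w x * ρ x + ∑ x : U, (v x - w x) * ρ x := by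
      rw [← sum_add_distrib]
      exact sum_congr rfl fun x _ => by ring
    have e2 : ∑ x : U, (v x) ^ 2 * f x = ∑ x : U, (w x) ^ 2 * f x
        + ∑ x : U, (2 * (v x - w x) * (w x * f x)) + ∑ x : U, (v x - w x) ^ 2 * f x := by
      rw [← sum_add_distrib, ← sum_add_distrib]
      exact sum_congr rfl fun x _ => by ring
    -- cross term nonneg
    have cross : 0 ≤ (∑ x : U, (v x - w x) * ρ x) * (1 / T)
        + ∑ x : U, (v x - w x) * (w x * f x) := by
      have e3 : (∑ x : U, (v x - w x) * ρ x) * (1 / T)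
          + ∑ x : U, (v x - w x) * (w x * f x)
          = ∑ x : U, (v x - w x) * (max a (ρ x)) / T := by
        rw [sum_mul, ← sum_add_distrib]
        refine sum_congr rfl fun x _ => ?_
        rw [hwf x]
        have : ρ x + max (a - ρ x) 0 = max a (ρ x) := by
          rcases le_total (ρ x) a with h | h
          · rw [max_eq_left (by linarith), max_eq_left h]; ring
          · rw [max_eq_right (by linarith), max_eq_right h]; ring
        rw [← this]
        field_simp
      rw [e3]
      have e4 : ∑ x : U, (v x - w x) * (max a (ρ x)) / T
          = (∑ x : U, (v x - w x) * (max a (ρ x) - a)) / T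
            + a * (∑ x : U, (v x - w x)) / T := by
        rw [← sum_div, mul_sum, ← add_div, ← sum_add_distrib]
        refine congrArg (· / T) (sum_congr rfl fun x _ => by ring)
      rw [e4, hd0]
      have hterm : ∀ x : U, 0 ≤ (v x - w x) * (max a (ρ x) - a) := by
        intro x
        rcases le_total (ρ x) a with h | h
        · rw [max_eq_left h]; simp
        · have hwz : w x = 0 := by
            rw [hwx, max_eq_right (by linarith)]; simp
          rw [max_eq_right h, hwz, sub_zero]
          exact mul_nonneg (hv0 x) (by linarith)
      have hsn : 0 ≤ ∑ x : U, (v x - w x) * (max a (ρ x) - a) := sum_nonneg fun x _ => hterm x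
      positivity
    -- put together
    have e2' : ∑ x : U, (2 * (v x - w x) * (w x * f x))
        = 2 * ∑ x : U, (v x - w x) * (w x * f x) := by
      rw [mul_sum]; exact sum_congr rfl fun x _ => by ring
    simp only [hg]
    rw [e1, e2, e2', hS]
    nlinarith [sq_nonneg (∑ x : U, (v x - w x) * ρ x)]
  have hEnonneg : ∀ v : U → ℝ, 0 ≤ ∑ x : U, (v x - w x) ^ 2 * f x := by
    intro v
    exact sum_nonneg fun x _ => mul_nonneg (sq_nonneg _) (hf x).le
  constructor
  · intro v hv0 hv1
    have := key v hv0 hv1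
    linarith [hEnonneg v]
  · intro v hv0 hv1 hmin
    have h1 := key v hv0 hv1
    have h2 := hmin w hw0 hwsum
    have hE : ∑ x : U, (v x - w x) ^ 2 * f x = 0 := by
      linarith [hEnonneg v]
    funext x
    have := (sum_eq_zero_iff_of_nonneg
      (fun y _ => mul_nonneg (sq_nonneg _) (hf y).le)).mp hE x (mem_univ x)
    have hfx := hf x
    have : (v x - w x) ^ 2 = 0 := by
      rcases mul_eq_zero.mp this with h | h
      · exact h
      · exact absurd h hfx.ne'
    have := pow_eq_zero_iff (n := 2) (by norm_num) |>.mp this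
    linarith [this]
end

section
/- Let U be a finite set, f : U → ℝ with f(x) > 0, and let 0 = ρ₁ ≤ ρ₂ ≤ ⋯ ≤ ρ_M be the values of a nonnegative function ρ on U sorted in ascending order with corresponding intensities f₁,…,f_M. Define a_k = (1 + Σ_{i=1}^k ρ_i²/f_i) / (Σ_{i=1}^k ρ_i/f_i) for 1 ≤ k ≤ M (with a_k = ∞ if the denominator is 0), and let k* = max{1 ≤ k ≤ M : a_k ≥ ρ_k}. Then a = a_{k*} is the unique solution of Σ_{i=1}^M (1/f_i) ρ_i (a − ρ_i)⁺ = 1; moreover k* is the unique index k with a_k ≥ ρ_k and (if k < M) a_{k+1} < ρ_{k+1}. -/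
open Finset

/-- Remark 1 (calculate a): explicit computation of the bandwidth. The values
`ρ 1 ≤ ⋯ ≤ ρ M` are sorted in ascending order with `ρ 1 = 0`, and the
convention `a_k = ∞` when `ρ_k = 0` is encoded by the disjunct `ρ k = 0` in
the condition `cond k`. -/
theorem stmt_5 (M : ℕ) (hM : 1 ≤ M) (ρ f : ℕ → ℝ)
    (hf : ∀ i, 1 ≤ i → i ≤ M → 0 < f i)
    (hρ0 : ∀ i, 1 ≤ i → i ≤ M → 0 ≤ ρ i)
    (hρ1 : ρ 1 = 0)
    (hsorted : ∀ i j, 1 ≤ i → i ≤ j → j ≤ M → ρ i ≤ ρ j)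
    (hρne : ∃ i, 1 ≤ i ∧ i ≤ M ∧ ρ i ≠ 0)
    (ak : ℕ → ℝ)
    (hak : ak = fun k =>
      (1 + ∑ i ∈ Finset.Icc 1 k, ρ i ^ 2 / f i) / (∑ i ∈ Finset.Icc 1 k, ρ i / f i))
    (cond : ℕ → Prop)
    (hcond : cond = fun k => ρ k = 0 ∨ ak k ≥ ρ k)
    (kstar : ℕ) (hks1 : 1 ≤ kstar) (hksM : kstar ≤ M) (hkscond : cond kstar)
    (hksmax : ∀ k, 1 ≤ k → k ≤ M → cond k → k ≤ kstar) :
    (0 < ak kstar ∧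
      ∑ i ∈ Finset.Icc 1 M, (1 / f i) * ρ i * max (ak kstar - ρ i) 0 = 1) ∧
    (∀ a : ℝ, 0 < a →
      ∑ i ∈ Finset.Icc 1 M, (1 / f i) * ρ i * max (a - ρ i) 0 = 1 → a = ak kstar) ∧
    (∀ k, 1 ≤ k → k ≤ M →
      ((cond k ∧ (k < M → ¬ cond (k + 1))) ↔ k = kstar)) := by
  have hakv : ∀ k, ak k =
      (1 + ∑ i ∈ Finset.Icc 1 k, ρ i ^ 2 / f i) / (∑ i ∈ Finset.Icc 1 k, ρ i / f i) := by
    intro k; rw [hak]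
  have hcondv : ∀ k, cond k ↔ (ρ k = 0 ∨ ak k ≥ ρ k) := by
    intro k; rw [hcond]
  have hfne : ∀ i, 1 ≤ i → i ≤ M → f i ≠ 0 := fun i h1 h2 => (hf i h1 h2).ne'
  have hterm1 : ∀ k, k ≤ M → ∀ i ∈ Finset.Icc 1 k, 0 ≤ ρ i / f i := by
    intro k hk i hi
    rw [Finset.mem_Icc] at hi
    exact div_nonneg (hρ0 i hi.1 (hi.2.trans hk)) (hf i hi.1 (hi.2.trans hk)).le
  have hterm2 : ∀ k, k ≤ M → ∀ i ∈ Finset.Icc 1 k, 0 ≤ ρ i ^ 2 / f i := by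
    intro k hk i hi
    rw [Finset.mem_Icc] at hi
    exact div_nonneg (sq_nonneg _) (hf i hi.1 (hi.2.trans hk)).le
  have hS1nn : ∀ k, k ≤ M → 0 ≤ ∑ i ∈ Finset.Icc 1 k, ρ i / f i :=
    fun k hk => Finset.sum_nonneg (hterm1 k hk)
  have hS2nn : ∀ k, k ≤ M → 0 ≤ ∑ i ∈ Finset.Icc 1 k, ρ i ^ 2 / f i :=
    fun k hk => Finset.sum_nonneg (hterm2 k hk)
  have hS1pos : ∀ k, 1 ≤ k → k ≤ M → 0 < ρ k → 0 < ∑ i ∈ Finset.Icc 1 k, ρ i / f i := by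
    intro k h1 h2 hρk
    have hkmem : k ∈ Finset.Icc 1 k := by simp [h1]
    have h3 : ρ k / f k ≤ ∑ i ∈ Finset.Icc 1 k, ρ i / f i :=
      Finset.single_le_sum (hterm1 k h2) hkmem
    have h4 : 0 < ρ k / f k := div_pos hρk (hf k h1 h2)
    linarith
  -- failing the condition propagates upward
  have hstep : ∀ k, 1 ≤ k → k + 1 ≤ M → ¬ cond k → ¬ cond (k + 1) := by
    intro k h1 h2 hnc hc
    rw [hcondv] at hnc hc
    push_neg at hnc
    obtain ⟨hρk, hak_lt⟩ := hnc
    have hkM : k ≤ M := by omega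
    have hρkpos : 0 < ρ k := (hρ0 k h1 hkM).lt_of_ne' hρk
    have hS1 : 0 < ∑ i ∈ Finset.Icc 1 k, ρ i / f i := hS1pos k h1 hkM hρkpos
    have hlt : 1 + ∑ i ∈ Finset.Icc 1 k, ρ i ^ 2 / f i
        < ρ k * ∑ i ∈ Finset.Icc 1 k, ρ i / f i := by
      rw [hakv] at hak_lt
      exact (div_lt_iff₀ hS1).mp hak_lt
    have hρ' : 0 < ρ (k + 1) := lt_of_lt_of_le hρkpos (hsorted k (k + 1) h1 (Nat.le_succ k) h2)
    rcases hc with h0 | hge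
    · exact hρ'.ne' h0
    · have hf' : 0 < f (k + 1) := hf (k + 1) (by omega) h2
      have hsum1 : ∑ i ∈ Finset.Icc 1 (k + 1), ρ i / f i
          = (∑ i ∈ Finset.Icc 1 k, ρ i / f i) + ρ (k + 1) / f (k + 1) :=
        Finset.sum_Icc_succ_top (by omega) _
      have hsum2 : ∑ i ∈ Finset.Icc 1 (k + 1), ρ i ^ 2 / f i
          = (∑ i ∈ Finset.Icc 1 k, ρ i ^ 2 / f i) + ρ (k + 1) ^ 2 / f (k + 1) :=
        Finset.sum_Icc_succ_top (by omega) _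
      have hS1' : 0 < (∑ i ∈ Finset.Icc 1 k, ρ i / f i) + ρ (k + 1) / f (k + 1) :=
        add_pos hS1 (div_pos hρ' hf')
      rw [hakv, hsum1, hsum2, ge_iff_le, le_div_iff₀ hS1'] at hge
      have hmuladd : ρ (k + 1) * ((∑ i ∈ Finset.Icc 1 k, ρ i / f i) + ρ (k + 1) / f (k + 1))
          = ρ (k + 1) * (∑ i ∈ Finset.Icc 1 k, ρ i / f i) + ρ (k + 1) ^ 2 / f (k + 1) := by
        rw [mul_add, sq, mul_div_assoc]
      have hle : ρ k * (∑ i ∈ Finset.Icc 1 k, ρ i / f i)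
          ≤ ρ (k + 1) * (∑ i ∈ Finset.Icc 1 k, ρ i / f i) :=
        mul_le_mul_of_nonneg_right (hsorted k (k + 1) h1 (Nat.le_succ k) h2) (hS1nn k hkM)
      linarith
  have hup : ∀ k, 1 ≤ k → ¬ cond k → ∀ m, k ≤ m → m ≤ M → ¬ cond m := by
    intro k h1 hnc m hkm
    induction m, hkm using Nat.le_induction with
    | base => intro _; exact hnc
    | succ n hn ih =>
      intro hM'
      exact hstep n (h1.trans hn) hM' (ih (by omega))
  have hcondall : ∀ k, 1 ≤ k → k ≤ kstar → cond k := by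
    intro k h1 hk
    by_contra hnc
    exact hup k h1 hnc kstar hk hksM hkscond
  -- the minimal index with nonzero ρ
  have hex : ∃ n, 1 ≤ n ∧ n ≤ M ∧ ρ n ≠ 0 := hρne
  obtain ⟨hj1, hjM, hjne⟩ := Nat.find_spec hex
  set j := Nat.find hex with hj
  have hjpos : 0 < ρ j := (hρ0 j hj1 hjM).lt_of_ne' hjne
  have hzero : ∀ i, 1 ≤ i → i < j → ρ i = 0 := by
    intro i h1 hij
    by_contra hne
    exact Nat.find_min hex hij ⟨h1, by omega, hne⟩
  have hjmem : j ∈ Finset.Icc 1 j := by simp [hj1]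
  have hSj1 : ∑ i ∈ Finset.Icc 1 j, ρ i / f i = ρ j / f j := by
    apply Finset.sum_eq_single_of_mem j hjmem
    intro b hb hbj
    rw [Finset.mem_Icc] at hb
    rw [hzero b hb.1 (lt_of_le_of_ne hb.2 hbj), zero_div]
  have hSj2 : ∑ i ∈ Finset.Icc 1 j, ρ i ^ 2 / f i = ρ j ^ 2 / f j := by
    apply Finset.sum_eq_single_of_mem j hjmem
    intro b hb hbj
    rw [Finset.mem_Icc] at hb
    rw [hzero b hb.1 (lt_of_le_of_ne hb.2 hbj)]
    simp
  have hcondj : cond j := by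
    rw [hcondv]
    right
    rw [hakv, hSj1, hSj2, ge_iff_le, le_div_iff₀ (div_pos hjpos (hf j hj1 hjM))]
    have h : ρ j * (ρ j / f j) = ρ j ^ 2 / f j := by rw [sq, mul_div_assoc]
    linarith
  have hjks : j ≤ kstar := hksmax j hj1 hjM hcondj
  have hρks : 0 < ρ kstar := lt_of_lt_of_le hjpos (hsorted j kstar hj1 hjks hksM)
  have hS1ks : 0 < ∑ i ∈ Finset.Icc 1 kstar, ρ i / f i := hS1pos kstar hks1 hksM hρks
  have haks_ge : ρ kstar ≤ ak kstar := by
    rcases (hcondv kstar).mp hkscond with h0 | h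
    · exact absurd h0 hρks.ne'
    · exact h
  have haks_pos : 0 < ak kstar := by
    rw [hakv]
    exact div_pos (by linarith [hS2nn kstar hksM]) hS1ks
  have hlt : kstar < M → ak kstar < ρ (kstar + 1) := by
    intro hkM
    have hnc : ¬ cond (kstar + 1) := by
      intro hc
      have := hksmax (kstar + 1) (by omega) (by omega) hc
      omega
    rw [hcondv] at hnc
    push_neg at hnc
    obtain ⟨hρ'ne, hak'⟩ := hnc
    have hρ' : 0 < ρ (kstar + 1) := (hρ0 _ (by omega) (by omega)).lt_of_ne' hρ'ne
    have hf' : 0 < f (kstar + 1) := hf _ (by omega) (by omega)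
    have hsum1 : ∑ i ∈ Finset.Icc 1 (kstar + 1), ρ i / f i
        = (∑ i ∈ Finset.Icc 1 kstar, ρ i / f i) + ρ (kstar + 1) / f (kstar + 1) :=
      Finset.sum_Icc_succ_top (by omega) _
    have hsum2 : ∑ i ∈ Finset.Icc 1 (kstar + 1), ρ i ^ 2 / f i
        = (∑ i ∈ Finset.Icc 1 kstar, ρ i ^ 2 / f i) + ρ (kstar + 1) ^ 2 / f (kstar + 1) :=
      Finset.sum_Icc_succ_top (by omega) _
    have hS1' : 0 < (∑ i ∈ Finset.Icc 1 kstar, ρ i / f i) + ρ (kstar + 1) / f (kstar + 1) :=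
      add_pos hS1ks (div_pos hρ' hf')
    rw [hakv, hsum1, hsum2, div_lt_iff₀ hS1'] at hak'
    have hmuladd : ρ (kstar + 1) * ((∑ i ∈ Finset.Icc 1 kstar, ρ i / f i)
          + ρ (kstar + 1) / f (kstar + 1))
        = ρ (kstar + 1) * (∑ i ∈ Finset.Icc 1 kstar, ρ i / f i)
          + ρ (kstar + 1) ^ 2 / f (kstar + 1) := by
      rw [mul_add, sq, mul_div_assoc]
    rw [hakv, div_lt_iff₀ hS1ks]
    linarith
  -- the main equation
  have hmax_eq : ∀ i ∈ Finset.Icc 1 kstar,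
      (1 / f i) * ρ i * max (ak kstar - ρ i) 0
        = ak kstar * (ρ i / f i) - ρ i ^ 2 / f i := by
    intro i hi
    rw [Finset.mem_Icc] at hi
    have hiM : i ≤ M := hi.2.trans hksM
    have hle : ρ i ≤ ak kstar := le_trans (hsorted i kstar hi.1 hi.2 hksM) haks_ge
    rw [max_eq_left (by linarith)]
    have hf0 := hfne i hi.1 hiM
    field_simp
  have hsum_lhs : ∑ i ∈ Finset.Icc 1 kstar, (1 / f i) * ρ i * max (ak kstar - ρ i) 0 = 1 := by
    rw [Finset.sum_congr rfl hmax_eq, Finset.sum_sub_distrib, ← Finset.mul_sum,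
      hakv, div_mul_cancel₀ _ hS1ks.ne']
    ring
  have hzero_tail : ∀ i ∈ Finset.Ioc kstar M,
      (1 / f i) * ρ i * max (ak kstar - ρ i) 0 = 0 := by
    intro i hi
    rw [Finset.mem_Ioc] at hi
    have hkM : kstar < M := lt_of_lt_of_le hi.1 hi.2
    have h1 : ak kstar < ρ (kstar + 1) := hlt hkM
    have h2 : ρ (kstar + 1) ≤ ρ i := hsorted (kstar + 1) i (by omega) (by omega) hi.2
    rw [max_eq_right (by linarith), mul_zero]
  have hdisj : Disjoint (Finset.Icc 1 kstar) (Finset.Ioc kstar M) := by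
    rw [Finset.disjoint_left]
    intro a ha hb
    rw [Finset.mem_Icc] at ha
    rw [Finset.mem_Ioc] at hb
    omega
  have hunion : Finset.Icc 1 M = Finset.Icc 1 kstar ∪ Finset.Ioc kstar M := by
    ext x
    simp only [Finset.mem_Icc, Finset.mem_Ioc, Finset.mem_union]
    omega
  have hMeq : ∑ i ∈ Finset.Icc 1 M, (1 / f i) * ρ i * max (ak kstar - ρ i) 0 = 1 := by
    rw [hunion, Finset.sum_union hdisj, hsum_lhs, Finset.sum_eq_zero hzero_tail, add_zero]
  -- a witness for strict monotonicity
  have hwitness : ∀ y : ℝ,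
      (∑ i ∈ Finset.Icc 1 M, (1 / f i) * ρ i * max (y - ρ i) 0 = 1) →
      ∃ i ∈ Finset.Icc 1 M, 0 < ρ i ∧ ρ i < y := by
    intro y hy
    by_contra hno
    push_neg at hno
    have hz : ∑ i ∈ Finset.Icc 1 M, (1 / f i) * ρ i * max (y - ρ i) 0 = 0 := by
      apply Finset.sum_eq_zero
      intro i hi
      have hi' := hi
      rw [Finset.mem_Icc] at hi'
      rcases (hρ0 i hi'.1 hi'.2).lt_or_eq with hpos | heq
      · have hle := hno i hi hpos
        rw [max_eq_right (by linarith), mul_zero]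
      · rw [← heq]; ring
    rw [hy] at hz
    exact one_ne_zero hz
  have hsmono : ∀ x y : ℝ, x < y →
      (∑ i ∈ Finset.Icc 1 M, (1 / f i) * ρ i * max (y - ρ i) 0 = 1) →
      ∑ i ∈ Finset.Icc 1 M, (1 / f i) * ρ i * max (x - ρ i) 0
        < ∑ i ∈ Finset.Icc 1 M, (1 / f i) * ρ i * max (y - ρ i) 0 := by
    intro x y hxy hy
    obtain ⟨i0, hi0mem, hi0pos, hi0lt⟩ := hwitness y hy
    apply Finset.sum_lt_sum
    · intro i hi
      rw [Finset.mem_Icc] at hi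
      have h1 : 0 ≤ (1 / f i) * ρ i :=
        mul_nonneg (one_div_nonneg.mpr (hf i hi.1 hi.2).le) (hρ0 i hi.1 hi.2)
      have h2 : max (x - ρ i) 0 ≤ max (y - ρ i) 0 := max_le_max (by linarith) le_rfl
      exact mul_le_mul_of_nonneg_left h2 h1
    · refine ⟨i0, hi0mem, ?_⟩
      have hi0' := hi0mem
      rw [Finset.mem_Icc] at hi0'
      have hfpos := hf i0 hi0'.1 hi0'.2
      have h1 : 0 < (1 / f i0) * ρ i0 := mul_pos (by positivity) hi0pos
      have h2 : max (x - ρ i0) 0 < max (y - ρ i0) 0 := by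
        rw [max_eq_left (by linarith : (0:ℝ) ≤ y - ρ i0)]
        exact max_lt (by linarith) (by linarith)
      exact mul_lt_mul_of_pos_left h2 h1
  refine ⟨⟨haks_pos, hMeq⟩, ?_, ?_⟩
  · intro a _ heq
    rcases lt_trichotomy a (ak kstar) with h | h | h
    · have hlt' := hsmono a (ak kstar) h hMeq
      rw [heq, hMeq] at hlt'
      exact absurd hlt' (lt_irrefl 1)
    · exact h
    · have hlt' := hsmono (ak kstar) a h heq
      rw [heq, hMeq] at hlt'
      exact absurd hlt' (lt_irrefl 1)
  · intro k h1 hkM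
    constructor
    · rintro ⟨hck, hcnext⟩
      have hk_le : k ≤ kstar := hksmax k h1 hkM hck
      by_contra hne
      have hklt : k < kstar := lt_of_le_of_ne hk_le hne
      have hkM' : k < M := lt_of_lt_of_le hklt hksM
      exact hcnext hkM' (hcondall (k + 1) (by omega) (by omega))
    · rintro rfl
      refine ⟨hkscond, fun hkM' hc => ?_⟩
      have := hksmax (k + 1) (by omega) (by omega) hc
      omega
end
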